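/- Let (X, ‖·‖, ≼) be a normal partially ordered Banach space whose partial order is induced by a closed convex cone K. Suppose F : K → K is an ≼-decreasing mapping satisfying condition (H¹), and F is compact. Then F has a unique fixed point x* in K, this fixed point satisfies x* ≼ F(0), and for every point z ∈ K the iterates Fⁿ z converge in norm to x* as n → ∞. (Theorem 5.2, case (a)) -/

import Mathlib

open Filter Topology

theorem auxTendstoEvenOdd {α : Type*} [TopologicalSpace α] {f : ℕ → α} {x : α}
    (he : Tendsto (fun k => f (2*k)) atTop (𝓝 x))
    (ho : Tendsto (fun k => f (2*k+1)) atTop (𝓝 x)) :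
    Tendsto f atTop (𝓝 x) := by
  rw [Filter.tendsto_def] at *
  intro s hs
  obtain ⟨N1, h1⟩ := Filter.mem_atTop_sets.1 (he s hs)
  obtain ⟨N2, h2⟩ := Filter.mem_atTop_sets.1 (ho s hs)
  rw [Filter.mem_atTop_sets]
  refine ⟨2*N1 + 2*N2 + 2, fun n hn => ?_⟩
  rcases Nat.even_or_odd n with ⟨k, hk⟩ | ⟨k, hk⟩
  · have hk' : n = 2*k := by omega
    have := h1 k (by omega)
    simpa [hk'] using this
  · have := h2 k (by omega)
    simpa [hk] using this

theorem auxMonoConv {X : Type*} [NormedAddCommGroup X] {K : Set X} (hKclosed : IsClosed K)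
    {l : ℝ} (hl : 0 < l) (hnorm : ∀ x y : X, x ∈ K → y - x ∈ K → ‖x‖ ≤ l * ‖y‖)
    {a : ℕ → X} (hmono : ∀ n m, n ≤ m → a m - a n ∈ K)
    {u : X} {φ : ℕ → ℕ} (hφ : StrictMono φ)
    (hlim : Tendsto (a ∘ φ) atTop (𝓝 u)) :
    Tendsto a atTop (𝓝 u) := by
  have hub : ∀ n, u - a n ∈ K := by
    intro n
    have h1 : Tendsto (fun k => a (φ k) - a n) atTop (𝓝 (u - a n)) :=
      hlim.sub tendsto_const_nhds
    refine hKclosed.mem_of_tendsto h1 ?_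
    filter_upwards [Filter.eventually_ge_atTop n] with k hk
    exact hmono n (φ k) (le_trans hk hφ.le_apply)
  rw [Metric.tendsto_atTop] at hlim ⊢
  intro ε hε
  have hlp : (0:ℝ) < l + 1 := by linarith
  obtain ⟨N, hN⟩ := hlim (ε / (l+1)) (by positivity)
  refine ⟨φ N, fun n hn => ?_⟩
  have h1 : a n - a (φ N) ∈ K := hmono _ _ hn
  have h2 : (u - a (φ N)) - (a n - a (φ N)) ∈ K := by
    rw [sub_sub_sub_cancel_right]; exact hub n
  have h3 : ‖a n - a (φ N)‖ ≤ l * ‖u - a (φ N)‖ := hnorm _ _ h1 h2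
  have hd : dist (a (φ N)) u < ε/(l+1) := hN N le_rfl
  have hd' : ‖u - a (φ N)‖ < ε/(l+1) := by
    rwa [dist_eq_norm, ← norm_neg, neg_sub] at hd
  calc dist (a n) u ≤ dist (a n) (a (φ N)) + dist (a (φ N)) u := dist_triangle _ _ _
    _ = ‖a n - a (φ N)‖ + dist (a (φ N)) u := by rw [dist_eq_norm]
    _ ≤ l * ‖u - a (φ N)‖ + dist (a (φ N)) u := by linarith
    _ < l * (ε/(l+1)) + ε/(l+1) := by
        nlinarith [mul_lt_mul_of_pos_left hd' hl]
    _ = ε := by field_simp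

theorem auxSqueeze {X : Type*} [NormedAddCommGroup X] {K : Set X} {l : ℝ}
    (hnorm : ∀ x y : X, x ∈ K → y - x ∈ K → ‖x‖ ≤ l * ‖y‖)
    {a b w : ℕ → X} {x : X}
    (h1 : ∀ n, w n - a n ∈ K) (h2 : ∀ n, b n - w n ∈ K)
    (ha : Tendsto a atTop (𝓝 x)) (hb : Tendsto b atTop (𝓝 x)) :
    Tendsto w atTop (𝓝 x) := by
  have hba : Tendsto (fun n => b n - a n) atTop (𝓝 0) := by
    simpa using hb.sub ha
  have hnb : Tendsto (fun n => l * ‖b n - a n‖) atTop (𝓝 0) := by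
    simpa using (hba.norm.const_mul l)
  have hwa : Tendsto (fun n => ‖w n - a n‖) atTop (𝓝 0) := by
    refine squeeze_zero (fun n => norm_nonneg _) (fun n => ?_) hnb
    exact hnorm _ _ (h1 n) (by rw [sub_sub_sub_cancel_right]; exact h2 n)
  have hw0 : Tendsto (fun n => w n - a n) atTop (𝓝 0) :=
    tendsto_zero_iff_norm_tendsto_zero.2 hwa
  have := hw0.add ha
  simpa using this

/-- The partial order on a Banach space induced by a cone `K`: `x ≼ y` iff `y - x ∈ K`. -/
def coneLe {X : Type*} [NormedAddCommGroup X] (K : Set X) (x y : X) : Prop := y - x ∈ K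

/-- Theorem 5.2, case (a): in a normal partially ordered Banach space with order induced
by the closed convex cone `K`, an ≼-decreasing compact mapping `F : K → K` satisfying
condition (H¹) has a unique fixed point `x*` in `K`; moreover `x* ≼ F 0` and for every
`z ∈ K` the iterates `Fⁿ z` converge in norm to `x*`. -/
theorem decreasing_compact_unique_fixed_point_of_normal
    {X : Type*} [NormedAddCommGroup X] [NormedSpace ℝ X] [CompleteSpace X]
    (K : Set X) (hKclosed : IsClosed K) (hK0 : (0 : X) ∈ K)
    (hKadd : ∀ x ∈ K, ∀ y ∈ K, x + y ∈ K)
    (hKsmul : ∀ c : ℝ, 0 ≤ c → ∀ x ∈ K, c • x ∈ K)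
    (hKpointed : ∀ x ∈ K, -x ∈ K → x = 0)
    -- normality of the order
    (hnormal : ∃ l : ℝ, 0 < l ∧ ∀ x y : X, x ∈ K → y - x ∈ K → ‖x‖ ≤ l * ‖y‖)
    -- F maps K into K and is ≼-decreasing
    (F : X → X) (hFmaps : ∀ x ∈ K, F x ∈ K)
    (hFdec : ∀ x ∈ K, ∀ y ∈ K, coneLe K x y → coneLe K (F y) (F x))
    -- F satisfies condition (H¹)
    (hH1 : ∀ u ∈ K, ∀ v ∈ K, F u = v → F v = u → u = v)
    -- F is compact: continuous and maps bounded sets to relatively compact sets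
    (hFcont : ContinuousOn F K)
    (hFcomp : ∀ C ⊆ K, Bornology.IsBounded C → IsCompact (closure (F '' C))) :
    ∃ x : X, x ∈ K ∧ F x = x ∧ coneLe K x (F 0) ∧
      (∀ y ∈ K, F y = y → y = x) ∧
      ∀ z ∈ K, Filter.Tendsto (fun n => F^[n] z) Filter.atTop (nhds x) := by
  obtain ⟨l, hl, hnorm⟩ := hnormal
  have hdec : ∀ p ∈ K, ∀ q ∈ K, q - p ∈ K → F p - F q ∈ K :=
    fun p hp q hq h => hFdec p hp q hq h
  have htrans : ∀ {p q r : X}, q - p ∈ K → r - q ∈ K → r - p ∈ K := by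
    intro p q r h1 h2
    have := hKadd _ h2 _ h1
    simpa [sub_add_sub_cancel] using this
  set u : ℕ → X := fun n => F^[n] 0 with hu_def
  have hu0 : u 0 = 0 := rfl
  have hstep : ∀ n, u (n+1) = F (u n) := fun n => Function.iterate_succ_apply' F n 0
  have huK : ∀ n, u n ∈ K := by
    intro n; induction n with
    | zero => exact hK0
    | succ n ih => rw [hstep]; exact hFmaps _ ih
  -- upper bound : u n ≼ u 1 for all n
  have hub : ∀ n, u 1 - u n ∈ K := by
    intro n
    cases n with
    | zero => rw [hu0, sub_zero]; exact huK 1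
    | succ m =>
        have h0 : u m - 0 ∈ K := by rw [sub_zero]; exact huK m
        have := hdec 0 hK0 (u m) (huK m) h0
        rw [← hstep m] at this
        exact this
  -- evens increasing
  have heven_mono : ∀ n, u (2*n+2) - u (2*n) ∈ K := by
    intro n; induction n with
    | zero => rw [hu0, sub_zero]; exact huK 2
    | succ n ih =>
        have e1 : u (2*n+1) - u (2*n+3) ∈ K := by
          have h := hdec (u (2*n)) (huK _) (u (2*n+2)) (huK _) ih
          rw [← hstep (2*n), ← hstep (2*n+2)] at h
          exact h
        have e2 := hdec (u (2*n+3)) (huK _) (u (2*n+1)) (huK _) e1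
        rw [← hstep (2*n+3), ← hstep (2*n+1)] at e2
        exact e2
  have ha_mono : ∀ k m, k ≤ m → u (2*m) - u (2*k) ∈ K := by
    intro k m hkm
    induction m, hkm using Nat.le_induction with
    | base => rw [sub_self]; exact hK0
    | succ m hm ih => exact htrans ih (heven_mono m)
  -- compactness of iterates
  set C : Set X := Set.range (fun n => u (n+1)) with hC_def
  have hCK : C ⊆ K := by rintro _ ⟨n, rfl⟩; exact huK _
  have hCbdd : Bornology.IsBounded C := by
    rw [isBounded_iff_forall_norm_le]
    refine ⟨l * ‖u 1‖, ?_⟩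
    rintro _ ⟨n, rfl⟩
    exact hnorm _ _ (huK _) (hub _)
  have hcomp := hFcomp C hCK hCbdd
  have haa_mem : ∀ k, u (2*k+2) ∈ closure (F '' C) := by
    intro k
    apply subset_closure
    refine ⟨u (2*k+1), ⟨2*k, rfl⟩, ?_⟩
    exact (hstep (2*k+1)).symm
  obtain ⟨x, hxcl, φ, hφ, hφlim⟩ := hcomp.tendsto_subseq haa_mem
  have haa : Tendsto (fun k => u (2*k+2)) atTop (𝓝 x) := by
    refine auxMonoConv hKclosed hl hnorm (fun n m hnm => ?_) hφ hφlim
    exact ha_mono (n+1) (m+1) (by omega)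
  have heven : Tendsto (fun k => u (2*k)) atTop (𝓝 x) := by
    refine (Filter.tendsto_add_atTop_iff_nat 1).1 ?_
    exact haa.congr (fun k => by norm_num [mul_add])
  have hxK : x ∈ K :=
    hKclosed.mem_of_tendsto heven (Filter.Eventually.of_forall fun k => huK _)
  -- continuity along sequences in K
  have hcont_seq : ∀ {c : X}, c ∈ K → ∀ {s : ℕ → X}, (∀ k, s k ∈ K) →
      Tendsto s atTop (𝓝 c) → Tendsto (fun k => F (s k)) atTop (𝓝 (F c)) := by
    intro c hc s hs hts
    have h1 : Tendsto s atTop (𝓝[K] c) :=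
      tendsto_nhdsWithin_of_tendsto_nhds_of_eventually_within _ hts
        (Filter.Eventually.of_forall hs)
    exact ((hFcont c hc).tendsto).comp h1
  have hodd : Tendsto (fun k => u (2*k+1)) atTop (𝓝 (F x)) := by
    have := hcont_seq hxK (fun k => huK _) heven
    exact this.congr (fun k => (hstep (2*k)).symm)
  have hFFx : F (F x) = x := by
    have h1 : Tendsto (fun k => u (2*k+2)) atTop (𝓝 (F (F x))) := by
      have := hcont_seq (hFmaps x hxK) (fun k => huK _) hodd
      exact this.congr (fun k => (hstep (2*k+1)).symm)
    exact tendsto_nhds_unique h1 haa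
  have hFx : F x = x := (hH1 x hxK (F x) (hFmaps x hxK) rfl hFFx).symm
  have hodd' : Tendsto (fun k => u (2*k+1)) atTop (𝓝 x) := by rwa [hFx] at hodd
  -- x ≼ F 0
  have hu1 : u 1 = F 0 := by rw [hstep 0, hu0]
  have hxle : coneLe K x (F 0) := by
    show F 0 - x ∈ K
    rw [← hu1]
    have h1 : Tendsto (fun k => u 1 - u (2*k)) atTop (𝓝 (u 1 - x)) :=
      tendsto_const_nhds.sub heven
    exact hKclosed.mem_of_tendsto h1 (Filter.Eventually.of_forall fun k => hub _)
  -- convergence of iterates from any z ∈ K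
  have hconv : ∀ z ∈ K, Tendsto (fun n => F^[n] z) atTop (𝓝 x) := by
    intro z hz
    have hzK : ∀ n, F^[n] z ∈ K := by
      intro n; induction n with
      | zero => exact hz
      | succ n ih => rw [Function.iterate_succ_apply']; exact hFmaps _ ih
    have hzstep : ∀ n, F^[n+1] z = F (F^[n] z) :=
      fun n => Function.iterate_succ_apply' F n z
    have hsand : ∀ n, (F^[2*n+1] z - u (2*n) ∈ K) ∧ (u (2*n+1) - F^[2*n+1] z ∈ K) := by
      intro n; induction n with
      | zero =>
          constructor
          · rw [hu0, sub_zero]; exact hzK 1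
          · have h0 : z - 0 ∈ K := by rw [sub_zero]; exact hz
            have := hdec 0 hK0 z hz h0
            show u (2*0+1) - F^[2*0+1] z ∈ K
            exact this
      | succ n ih =>
          obtain ⟨ih1, ih2⟩ := ih
          have s3 : F^[2*n+2] z - u (2*n+2) ∈ K := by
            have := hdec (F^[2*n+1] z) (hzK _) (u (2*n+1)) (huK _) ih2
            rw [← hstep (2*n+1), ← hzstep (2*n+1)] at this
            exact this
          have s4 : u (2*n+1) - F^[2*n+2] z ∈ K := by
            have := hdec (u (2*n)) (huK _) (F^[2*n+1] z) (hzK _) ih1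
            rw [← hstep (2*n), ← hzstep (2*n+1)] at this
            exact this
          constructor
          · have := hdec (F^[2*n+2] z) (hzK _) (u (2*n+1)) (huK _) s4
            rw [← hstep (2*n+1), ← hzstep (2*n+2)] at this
            exact this
          · have := hdec (u (2*n+2)) (huK _) (F^[2*n+2] z) (hzK _) s3
            rw [← hstep (2*n+2), ← hzstep (2*n+2)] at this
            exact this
    have hsand2 : ∀ n, (F^[2*n+2] z - u (2*n+2) ∈ K) ∧ (u (2*n+1) - F^[2*n+2] z ∈ K) := by
      intro n
      obtain ⟨ih1, ih2⟩ := hsand n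
      constructor
      · have := hdec (F^[2*n+1] z) (hzK _) (u (2*n+1)) (huK _) ih2
        rw [← hstep (2*n+1), ← hzstep (2*n+1)] at this
        exact this
      · have := hdec (u (2*n)) (huK _) (F^[2*n+1] z) (hzK _) ih1
        rw [← hstep (2*n), ← hzstep (2*n+1)] at this
        exact this
    have hoz : Tendsto (fun n => F^[2*n+1] z) atTop (𝓝 x) :=
      auxSqueeze hnorm (fun n => (hsand n).1) (fun n => (hsand n).2) heven hodd'
    have hez : Tendsto (fun n => F^[2*n+2] z) atTop (𝓝 x) :=
      auxSqueeze hnorm (fun n => (hsand2 n).1) (fun n => (hsand2 n).2) haa hodd'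
    have hcomb : Tendsto (fun n => F^[n+1] z) atTop (𝓝 x) := by
      refine auxTendstoEvenOdd ?_ ?_
      · exact hoz
      · exact hez.congr (fun k => by norm_num)
    exact (Filter.tendsto_add_atTop_iff_nat 1).1 hcomb
  refine ⟨x, hxK, hFx, hxle, ?_, hconv⟩
  intro y hy hFy
  have h1 : Tendsto (fun n => F^[n] y) atTop (𝓝 x) := hconv y hy
  have h2 : (fun n : ℕ => F^[n] y) = fun _ => y := by
    funext n; exact Function.iterate_fixed hFy n
  rw [h2] at h1
  exact tendsto_nhds_unique tendsto_const_nhds h1
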